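/- Let H = p1^2 + p2^2 + a1*(x^2 + y^2) + a2/x^2 + a3/y^2, L1 = (x*p2 - y*p1)^2 + a2*y^2/x^2 + a3*x^2/y^2, L2 = p1^2 + a1*x^2 + a2/x^2 on the open set x ≠ 0, y ≠ 0. Then {H, L1} = 0 and {H, L2} = 0 for the canonical Poisson bracket. -/

import Mathlib

/-- Canonical Poisson bracket on phase space (x, y, p1, p2). -/
noncomputable def poissonBracket (F G : ℝ → ℝ → ℝ → ℝ → ℝ) (x y p1 p2 : ℝ) : ℝ :=
    deriv (fun t => F x y t p2) p1 * deriv (fun t => G t y p1 p2) x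
  + deriv (fun t => F x y p1 t) p2 * deriv (fun t => G x t p1 p2) y
  - deriv (fun t => G x y t p2) p1 * deriv (fun t => F t y p1 p2) x
  - deriv (fun t => G x y p1 t) p2 * deriv (fun t => F x t p1 p2) y

noncomputable def Hf (a1 a2 a3 : ℝ) : ℝ → ℝ → ℝ → ℝ → ℝ :=
  fun x y p1 p2 => p1^2 + p2^2 + a1*(x^2 + y^2) + a2/x^2 + a3/y^2
noncomputable def L1f (a2 a3 : ℝ) : ℝ → ℝ → ℝ → ℝ → ℝ :=
  fun x y p1 p2 => (x*p2 - y*p1)^2 + a2*y^2/x^2 + a3*x^2/y^2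
noncomputable def L2f (a1 a2 : ℝ) : ℝ → ℝ → ℝ → ℝ → ℝ :=
  fun x _ p1 _ => p1^2 + a1*x^2 + a2/x^2

private lemma hd_inv_sq (c x : ℝ) (hx : x ≠ 0) :
    HasDerivAt (fun t : ℝ => c / t^2) (-2*c/x^3) x := by
  have h := (hasDerivAt_const x c).div (hasDerivAt_pow 2 x) (pow_ne_zero 2 hx)
  refine h.congr_deriv ?_
  field_simp
  ring

theorem E1_superintegrable (a1 a2 a3 : ℝ) (x y p1 p2 : ℝ)
    (hx : x ≠ 0) (hy : y ≠ 0) :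
    poissonBracket (Hf a1 a2 a3) (L1f a2 a3) x y p1 p2 = 0 ∧
    poissonBracket (Hf a1 a2 a3) (L2f a1 a2) x y p1 p2 = 0 := by
  -- H derivatives
  have hHp1 : HasDerivAt (fun t => Hf a1 a2 a3 x y t p2) (2*p1) p1 := by
    unfold Hf
    have := ((((hasDerivAt_pow 2 p1).add_const (p2^2)).add_const
      (a1*(x^2+y^2))).add_const (a2/x^2)).add_const (a3/y^2)
    simpa using this
  have hHp2 : HasDerivAt (fun t => Hf a1 a2 a3 x y p1 t) (2*p2) p2 := by
    unfold Hf
    have := (((((hasDerivAt_pow 2 p2).const_add (p1^2)).add_const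
      (a1*(x^2+y^2))).add_const (a2/x^2)).add_const (a3/y^2))
    simpa using this
  have hHx : HasDerivAt (fun t => Hf a1 a2 a3 t y p1 p2) (2*a1*x - 2*a2/x^3) x := by
    unfold Hf
    have h1 : HasDerivAt (fun t : ℝ => p1^2 + p2^2 + a1*(t^2+y^2)) (a1*(2*x)) x := by
      have := (((hasDerivAt_pow 2 x).add_const (y^2)).const_mul a1).const_add (p1^2+p2^2)
      simpa [add_assoc] using this
    have := (h1.add (hd_inv_sq a2 x hx)).add_const (a3/y^2)
    refine this.congr_deriv ?_
    ring
  have hHy' : HasDerivAt (fun t => Hf a1 a2 a3 x t p1 p2) (2*a1*y - 2*a3/y^3) y := by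
    unfold Hf
    have h1 : HasDerivAt (fun t : ℝ => p1^2 + p2^2 + a1*(x^2+t^2) + a2/x^2)
        (a1*(2*y)) y := by
      have := ((((hasDerivAt_pow 2 y).const_add (x^2)).const_mul a1).const_add
        (p1^2+p2^2)).add_const (a2/x^2)
      simpa [add_assoc] using this
    have := h1.add (hd_inv_sq a3 y hy)
    refine this.congr_deriv ?_
    ring
  -- L1 derivatives
  have hL1p1 : HasDerivAt (fun t => L1f a2 a3 x y t p2) (2*(x*p2-y*p1)*(-y)) p1 := by
    unfold L1f
    have hlin : HasDerivAt (fun t : ℝ => x*p2 - y*t) (0 - y*1) p1 :=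
      (hasDerivAt_const p1 (x*p2)).sub ((hasDerivAt_id p1).const_mul y)
    have := ((hlin.pow 2).add_const (a2*y^2/x^2)).add_const (a3*x^2/y^2)
    refine this.congr_deriv ?_
    ring
  have hL1p2 : HasDerivAt (fun t => L1f a2 a3 x y p1 t) (2*(x*p2-y*p1)*x) p2 := by
    unfold L1f
    have hlin : HasDerivAt (fun t : ℝ => x*t - y*p1) (x*1 - 0) p2 :=
      (((hasDerivAt_id p2).const_mul x).sub (hasDerivAt_const p2 (y*p1)))
    have := ((hlin.pow 2).add_const (a2*y^2/x^2)).add_const (a3*x^2/y^2)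
    refine this.congr_deriv ?_
    ring
  have hL1x : HasDerivAt (fun t => L1f a2 a3 t y p1 p2)
      (2*(x*p2-y*p1)*p2 - 2*(a2*y^2)/x^3 + 2*a3*x/y^2) x := by
    unfold L1f
    have hlin : HasDerivAt (fun t : ℝ => t*p2 - y*p1) (1*p2 - 0) x :=
      ((hasDerivAt_id x).mul_const p2).sub (hasDerivAt_const x (y*p1))
    have h3 : HasDerivAt (fun t : ℝ => a3*t^2/y^2) (a3*(2*x^1)/y^2) x :=
      ((hasDerivAt_pow 2 x).const_mul a3).div_const (y^2)
    have := ((hlin.pow 2).add (hd_inv_sq (a2*y^2) x hx)).add h3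
    refine this.congr_deriv ?_
    ring
  have hL1y : HasDerivAt (fun t => L1f a2 a3 x t p1 p2)
      (2*(x*p2-y*p1)*(-p1) + 2*a2*y/x^2 - 2*(a3*x^2)/y^3) y := by
    unfold L1f
    have hlin : HasDerivAt (fun t : ℝ => x*p2 - t*p1) (0 - 1*p1) y :=
      (hasDerivAt_const y (x*p2)).sub ((hasDerivAt_id y).mul_const p1)
    have h2 : HasDerivAt (fun t : ℝ => a2*t^2/x^2) (a2*(2*y^1)/x^2) y :=
      ((hasDerivAt_pow 2 y).const_mul a2).div_const (x^2)
    have := ((hlin.pow 2).add h2).add (hd_inv_sq (a3*x^2) y hy)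
    refine this.congr_deriv ?_
    ring
  -- L2 derivatives
  have hL2p1 : HasDerivAt (fun t => L2f a1 a2 x y t p2) (2*p1) p1 := by
    unfold L2f
    have := ((hasDerivAt_pow 2 p1).add_const (a1*x^2)).add_const (a2/x^2)
    simpa using this
  have hL2p2 : HasDerivAt (fun t => L2f a1 a2 x y p1 t) 0 p2 :=
    hasDerivAt_const p2 _
  have hL2x : HasDerivAt (fun t => L2f a1 a2 t y p1 p2) (2*a1*x - 2*a2/x^3) x := by
    unfold L2f
    have h1 : HasDerivAt (fun t : ℝ => p1^2 + a1*t^2) (a1*(2*x)) x := by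
      have := ((hasDerivAt_pow 2 x).const_mul a1).const_add (p1^2)
      simpa using this
    have := h1.add (hd_inv_sq a2 x hx)
    refine this.congr_deriv ?_
    ring
  have hL2y : HasDerivAt (fun t => L2f a1 a2 x t p1 p2) 0 y :=
    hasDerivAt_const y _
  constructor
  · unfold poissonBracket
    rw [hHp1.deriv, hHp2.deriv, hHx.deriv, hHy'.deriv, hL1p1.deriv, hL1p2.deriv,
      hL1x.deriv, hL1y.deriv]
    field_simp
    ring
  · unfold poissonBracket
    rw [hHp1.deriv, hHp2.deriv, hHx.deriv, hHy'.deriv, hL2p1.deriv, hL2p2.deriv,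
      hL2x.deriv, hL2y.deriv]
    field_simp
    ring
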